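/- The map l of the previous statements satisfies the second colinearity condition (id_H⊗l)∘Δ = (δ_L⊗id_P)∘l, where δ_L: P → H⊗P is the induced left coaction δ_L(p) = S⁻¹(p₍₁₎)⊗p₍₀₎. -/

import Mathlib

open TensorProduct

section

variable (k : Type*) [CommRing k] (H : Type*) [Ring H] [HopfAlgebra k H]
variable (B B' : Type*) [Ring B] [Algebra k B] [Ring B'] [Algebra k B']

/-- The coaction id ⊗ Δ on B ⊗ H, viewed as a map B⊗H → (B⊗H)⊗H. -/
noncomputable def deltaBH : B ⊗[k] H →ₗ[k] (B ⊗[k] H) ⊗[k] H :=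
  (TensorProduct.assoc k B H H).symm.toLinearMap
    ∘ₗ TensorProduct.map LinearMap.id Coalgebra.comul

/-- The right H-coaction on P = (B⊗H) ⊕ (B'⊗H), acting as id ⊗ Δ on each summand. -/
noncomputable def deltaP : ((B ⊗[k] H) × (B' ⊗[k] H)) →ₗ[k]
    ((B ⊗[k] H) × (B' ⊗[k] H)) ⊗[k] H :=
  TensorProduct.map (LinearMap.inl k (B ⊗[k] H) (B' ⊗[k] H)) LinearMap.id
      ∘ₗ deltaBH k H B ∘ₗ LinearMap.fst k (B ⊗[k] H) (B' ⊗[k] H)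
  + TensorProduct.map (LinearMap.inr k (B ⊗[k] H) (B' ⊗[k] H)) LinearMap.id
      ∘ₗ deltaBH k H B' ∘ₗ LinearMap.snd k (B ⊗[k] H) (B' ⊗[k] H)

/-- The map l : H → P ⊗ P,
l(h) = (1⊗S(h₍₁₎),0)⊗(1⊗h₍₂₎,0) + (0,1⊗S(h₍₁₎))⊗(0,1⊗h₍₂₎). -/
noncomputable def connMap : H →ₗ[k]
    ((B ⊗[k] H) × (B' ⊗[k] H)) ⊗[k] ((B ⊗[k] H) × (B' ⊗[k] H)) :=
  (TensorProduct.map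
      ((LinearMap.inl k (B ⊗[k] H) (B' ⊗[k] H)) ∘ₗ (TensorProduct.mk k B H 1)
        ∘ₗ HopfAlgebra.antipode (R := k))
      ((LinearMap.inl k (B ⊗[k] H) (B' ⊗[k] H)) ∘ₗ (TensorProduct.mk k B H 1))
    ∘ₗ Coalgebra.comul)
  + (TensorProduct.map
      ((LinearMap.inr k (B ⊗[k] H) (B' ⊗[k] H)) ∘ₗ (TensorProduct.mk k B' H 1)
        ∘ₗ HopfAlgebra.antipode (R := k))
      ((LinearMap.inr k (B ⊗[k] H) (B' ⊗[k] H)) ∘ₗ (TensorProduct.mk k B' H 1))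
    ∘ₗ Coalgebra.comul)

/-- The lifted canonical map χ̃ : P ⊗ P → P ⊗ H, p ⊗ p' ↦ p·p'₍₀₎ ⊗ p'₍₁₎. -/
noncomputable def chiTildeP :
    ((B ⊗[k] H) × (B' ⊗[k] H)) ⊗[k] ((B ⊗[k] H) × (B' ⊗[k] H)) →ₗ[k]
      ((B ⊗[k] H) × (B' ⊗[k] H)) ⊗[k] H :=
  TensorProduct.map (LinearMap.mul' k _) LinearMap.id
    ∘ₗ (TensorProduct.assoc k ((B ⊗[k] H) × (B' ⊗[k] H))
          ((B ⊗[k] H) × (B' ⊗[k] H)) H).symm.toLinearMap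
    ∘ₗ TensorProduct.map LinearMap.id (deltaP k H B B')

/-- The induced left coaction δ_L : P → H ⊗ P, p ↦ S⁻¹(p₍₁₎) ⊗ p₍₀₎,
for a given inverse Sinv of the antipode. -/
noncomputable def deltaLP (Sinv : H →ₗ[k] H) :
    ((B ⊗[k] H) × (B' ⊗[k] H)) →ₗ[k] H ⊗[k] ((B ⊗[k] H) × (B' ⊗[k] H)) :=
  TensorProduct.map Sinv LinearMap.id
    ∘ₗ (TensorProduct.comm k ((B ⊗[k] H) × (B' ⊗[k] H)) H).toLinearMap
    ∘ₗ deltaP k H B B'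

section ConvAux
open Coalgebra

noncomputable def conv (f g : H →ₗ[k] H ⊗[k] H) : H →ₗ[k] H ⊗[k] H :=
  LinearMap.mul' k (H ⊗[k] H) ∘ₗ TensorProduct.map f g ∘ₗ Coalgebra.comul

noncomputable def convUnit : H →ₗ[k] H ⊗[k] H :=
  Algebra.linearMap k (H ⊗[k] H) ∘ₗ Coalgebra.counit

variable {k H}

lemma conv_repr (f g : H →ₗ[k] H ⊗[k] H) {a : H} {ι : Type*} (r : Coalgebra.Repr k a ι) :
    conv k H f g a = ∑ i ∈ r.index, f (r.left i) * g (r.right i) := by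
  simp [conv, ← r.eq, map_sum]

lemma smul_counit_sum {a : H} {ι : Type*} (r : Coalgebra.Repr k a ι) :
    ∑ i ∈ r.index, Coalgebra.counit (R := k) (r.left i) • r.right i = a := by
  have h := Coalgebra.sum_counit_tmul_eq r
  apply_fun (TensorProduct.lid k H) at h
  simp only [map_sum, lid_tmul, one_smul] at h
  exact h

lemma smul_counit_sum' {a : H} {ι : Type*} (r : Coalgebra.Repr k a ι) :
    ∑ i ∈ r.index, Coalgebra.counit (R := k) (r.right i) • r.left i = a := by
  have h := Coalgebra.sum_tmul_counit_eq r
  apply_fun (TensorProduct.rid k H) at h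
  simp only [map_sum, rid_tmul, one_smul] at h
  exact h

lemma conv_unit_left (f : H →ₗ[k] H ⊗[k] H) : conv k H (convUnit k H) f = f := by
  ext a
  calc conv k H (convUnit k H) f a
      = ∑ i ∈ (ℛ k a).index,
          (Algebra.linearMap k (H ⊗[k] H)) (Coalgebra.counit ((ℛ k a).left i))
            * f ((ℛ k a).right i) := by
        rw [conv_repr _ _ (ℛ k a)]; rfl
    _ = ∑ i ∈ (ℛ k a).index,
          f (Coalgebra.counit (R := k) ((ℛ k a).left i) • (ℛ k a).right i) := by
        refine Finset.sum_congr rfl fun i _ => ?_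
        rw [Algebra.linearMap_apply, ← Algebra.smul_def, map_smul]
    _ = f a := by rw [← map_sum, smul_counit_sum]

lemma conv_unit_right (f : H →ₗ[k] H ⊗[k] H) : conv k H f (convUnit k H) = f := by
  ext a
  calc conv k H f (convUnit k H) a
      = ∑ i ∈ (ℛ k a).index,
          f ((ℛ k a).left i) *
            (Algebra.linearMap k (H ⊗[k] H)) (Coalgebra.counit ((ℛ k a).right i)) := by
        rw [conv_repr _ _ (ℛ k a)]; rfl
    _ = ∑ i ∈ (ℛ k a).index,
          f (Coalgebra.counit (R := k) ((ℛ k a).right i) • (ℛ k a).left i) := by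
        refine Finset.sum_congr rfl fun i _ => ?_
        rw [Algebra.linearMap_apply, ← Algebra.commutes, ← Algebra.smul_def, map_smul]
    _ = f a := by rw [← map_sum, smul_counit_sum']

lemma conv_assoc (f g w : H →ₗ[k] H ⊗[k] H) :
    conv k H (conv k H f g) w = conv k H f (conv k H g w) := by
  ext a
  have E := Coalgebra.sum_map_tmul_tmul_eq (R := k) f g w a (repr := ℛ k a)
    (a₁ := fun i => ℛ k ((ℛ k a).left i)) (a₂ := fun i => ℛ k ((ℛ k a).right i))
  apply_fun (LinearMap.mul' k (H ⊗[k] H) ∘ₗ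
      LinearMap.lTensor (H ⊗[k] H) (LinearMap.mul' k (H ⊗[k] H))) at E
  simp only [map_sum, LinearMap.comp_apply, LinearMap.lTensor_tmul, LinearMap.mul'_apply] at E
  calc conv k H (conv k H f g) w a
      = ∑ i ∈ (ℛ k a).index, conv k H f g ((ℛ k a).left i) * w ((ℛ k a).right i) :=
        conv_repr _ _ (ℛ k a)
    _ = ∑ i ∈ (ℛ k a).index, ∑ j ∈ (ℛ k ((ℛ k a).left i)).index,
          f ((ℛ k ((ℛ k a).left i)).left j) *
          ((ℛ k ((ℛ k a).left i)).right j |> g) * w ((ℛ k a).right i) := by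
        refine Finset.sum_congr rfl fun i _ => ?_
        rw [conv_repr _ _ (ℛ k ((ℛ k a).left i)), Finset.sum_mul]
    _ = ∑ i ∈ (ℛ k a).index, ∑ j ∈ (ℛ k ((ℛ k a).right i)).index,
          f ((ℛ k a).left i) *
          (g ((ℛ k ((ℛ k a).right i)).left j) * w ((ℛ k ((ℛ k a).right i)).right j)) := by
        simp only [mul_assoc]; exact E.symm
    _ = ∑ i ∈ (ℛ k a).index, f ((ℛ k a).left i) * conv k H g w ((ℛ k a).right i) := by
        refine Finset.sum_congr rfl fun i _ => ?_
        rw [conv_repr _ _ (ℛ k ((ℛ k a).right i)), Finset.mul_sum]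
    _ = conv k H f (conv k H g w) a := (conv_repr _ _ (ℛ k a)).symm

lemma comul_repr (x : H) : Coalgebra.comul (R:=k) x
    = ∑ i ∈ (ℛ k x).index, (ℛ k x).left i ⊗ₜ[k] (ℛ k x).right i := ((ℛ k x).eq).symm

variable (k H)

noncomputable def antiG : H →ₗ[k] H ⊗[k] H :=
  TensorProduct.map (HopfAlgebra.antipode (R:=k)) (HopfAlgebra.antipode (R:=k))
    ∘ₗ (TensorProduct.comm k H H).toLinearMap ∘ₗ Coalgebra.comul

variable {k H}

lemma antiG_repr {a : H} {ι : Type*} (r : Coalgebra.Repr k a ι) :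
    antiG k H a = ∑ i ∈ r.index,
      HopfAlgebra.antipode (R:=k) (r.right i) ⊗ₜ[k] HopfAlgebra.antipode (R:=k) (r.left i) := by
  simp [antiG, ← r.eq, map_sum]

lemma smul_counit_sum_app (x : H) :
    ∑ i ∈ (ℛ k x).index, Coalgebra.counit (R := k) ((ℛ k x).left i) • (ℛ k x).right i = x :=
  smul_counit_sum (ℛ k x)

lemma antiG_apply (x : H) : antiG k H x = ∑ i ∈ (ℛ k x).index,
    HopfAlgebra.antipode (R:=k) ((ℛ k x).right i) ⊗ₜ[k]
      HopfAlgebra.antipode (R:=k) ((ℛ k x).left i) := antiG_repr (ℛ k x)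

lemma conv_FD : conv k H (Coalgebra.comul ∘ₗ HopfAlgebra.antipode (R:=k)) Coalgebra.comul
    = convUnit k H := by
  ext a
  rw [conv_repr _ _ (ℛ k a)]
  calc ∑ i ∈ (ℛ k a).index,
        (Coalgebra.comul ∘ₗ HopfAlgebra.antipode (R:=k)) ((ℛ k a).left i)
          * Coalgebra.comul ((ℛ k a).right i)
      = ∑ i ∈ (ℛ k a).index,
        Coalgebra.comul (R:=k) (HopfAlgebra.antipode (R:=k) ((ℛ k a).left i)
          * (ℛ k a).right i) := by
        refine Finset.sum_congr rfl fun i _ => ?_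
        rw [LinearMap.comp_apply, Bialgebra.comul_mul]
    _ = Coalgebra.comul (R:=k) (algebraMap k H (Coalgebra.counit a)) := by
        rw [← map_sum, HopfAlgebra.sum_antipode_mul_eq_algebraMap_counit]
    _ = convUnit k H a := by
        rw [Bialgebra.comul_algebraMap]; rfl

lemma conv_DG : conv k H Coalgebra.comul (antiG k H) = convUnit k H := by
  ext a
  -- Ψ : H ⊗ (H ⊗ (H ⊗ H)) → H ⊗ H,  w⊗(x⊗(y⊗z)) ↦ (w * S z) ⊗ (x * S y)
  set Ψ : H ⊗[k] (H ⊗[k] (H ⊗[k] H)) →ₗ[k] H ⊗[k] H :=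
    LinearMap.mul' k (H ⊗[k] H)
      ∘ₗ (TensorProduct.assoc k H H (H ⊗[k] H)).symm.toLinearMap
      ∘ₗ LinearMap.lTensor H (LinearMap.lTensor H
          (TensorProduct.map (HopfAlgebra.antipode (R:=k)) (HopfAlgebra.antipode (R:=k))
            ∘ₗ (TensorProduct.comm k H H).toLinearMap)) with hΨ
  have hΨapp : ∀ w x y z : H, Ψ (w ⊗ₜ (x ⊗ₜ (y ⊗ₜ z)))
      = (w * HopfAlgebra.antipode (R:=k) z) ⊗ₜ (x * HopfAlgebra.antipode (R:=k) y) := by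
    intro w x y z
    simp [hΨ, Algebra.TensorProduct.tmul_mul_tmul]
  -- step 1: top-level coassociativity
  have A3 := Coalgebra.sum_tmul_tmul_eq (R:=k) (ℛ k a)
    (fun i => ℛ k ((ℛ k a).left i)) (fun i => ℛ k ((ℛ k a).right i))
  -- step 2: comul on the last slot
  apply_fun LinearMap.lTensor H (LinearMap.lTensor H (Coalgebra.comul (R:=k))) at A3
  simp only [map_sum, LinearMap.lTensor_tmul, comul_repr, tmul_sum] at A3
  -- step 3: inner coassociativity, tensored with l i
  have B3 : ∀ i, (ℛ k a).left i ⊗ₜ[k]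
      (∑ j ∈ (ℛ k ((ℛ k a).right i)).index, ∑ m ∈ (ℛ k ((ℛ k ((ℛ k a).right i)).left j)).index,
        (ℛ k ((ℛ k ((ℛ k a).right i)).left j)).left m ⊗ₜ[k]
          ((ℛ k ((ℛ k ((ℛ k a).right i)).left j)).right m ⊗ₜ[k] (ℛ k ((ℛ k a).right i)).right j))
      = (ℛ k a).left i ⊗ₜ[k]
      (∑ j ∈ (ℛ k ((ℛ k a).right i)).index, ∑ m ∈ (ℛ k ((ℛ k ((ℛ k a).right i)).right j)).index,
        (ℛ k ((ℛ k a).right i)).left j ⊗ₜ[k]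
          ((ℛ k ((ℛ k ((ℛ k a).right i)).right j)).left m ⊗ₜ[k]
            (ℛ k ((ℛ k ((ℛ k a).right i)).right j)).right m)) := by
    intro i
    exact congrArg _ (Coalgebra.sum_tmul_tmul_eq (R:=k) (ℛ k ((ℛ k a).right i))
      (fun j => ℛ k ((ℛ k ((ℛ k a).right i)).left j))
      (fun j => ℛ k ((ℛ k ((ℛ k a).right i)).right j)))
  have B3s := Finset.sum_congr (rfl : (ℛ k a).index = (ℛ k a).index) (fun i _ => B3 i)
  simp only [tmul_sum] at B3s
  have E4 := A3.trans B3s.symm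
  apply_fun Ψ at E4
  simp only [map_sum, hΨapp] at E4
  rw [conv_repr _ _ (ℛ k a)]
  simp only [comul_repr, antiG_apply, Finset.sum_mul_sum, Algebra.TensorProduct.tmul_mul_tmul]
  rw [E4]
  simp only [← tmul_sum]
  simp only [HopfAlgebra.sum_mul_antipode_eq_smul]
  simp only [tmul_smul, smul_tmul', ← mul_smul_comm, ← map_smul]
  simp only [← sum_tmul, ← Finset.mul_sum, ← map_sum, smul_counit_sum_app]
  rw [HopfAlgebra.sum_mul_antipode_eq_algebraMap_counit (ℛ k a)]
  simp [convUnit, Algebra.TensorProduct.algebraMap_apply]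

lemma comul_antipode :
    (Coalgebra.comul ∘ₗ HopfAlgebra.antipode (R:=k) : H →ₗ[k] H ⊗[k] H) = antiG k H := by
  calc (Coalgebra.comul ∘ₗ HopfAlgebra.antipode (R:=k) : H →ₗ[k] H ⊗[k] H)
      = conv k H (Coalgebra.comul ∘ₗ HopfAlgebra.antipode (R:=k)) (convUnit k H) :=
        (conv_unit_right _).symm
    _ = conv k H (Coalgebra.comul ∘ₗ HopfAlgebra.antipode (R:=k))
          (conv k H Coalgebra.comul (antiG k H)) := by rw [conv_DG]
    _ = conv k H (conv k H (Coalgebra.comul ∘ₗ HopfAlgebra.antipode (R:=k)) Coalgebra.comul)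
          (antiG k H) := (conv_assoc _ _ _).symm
    _ = conv k H (convUnit k H) (antiG k H) := by rw [conv_FD]
    _ = antiG k H := conv_unit_left _

/-- A representation of `comul (antipode x)` built from a representation of `comul x`. -/
noncomputable def Coalgebra.Repr.antipodeRepr {x : H} {ι : Type*} (r : Coalgebra.Repr k x ι) :
    Coalgebra.Repr k (HopfAlgebra.antipode (R:=k) x) ι where
  index := r.index
  left i := HopfAlgebra.antipode (R:=k) (r.right i)
  right i := HopfAlgebra.antipode (R:=k) (r.left i)
  eq := by
    have := congrFun (congrArg DFunLike.coe (comul_antipode (k:=k) (H:=H))) x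
    simp only [LinearMap.comp_apply] at this
    rw [this, antiG_repr r]

end ConvAux

open Coalgebra in
lemma connMap_repr {h : H} {ι : Type*} (r : Coalgebra.Repr k h ι) :
    connMap k H B B' h
      = (∑ i ∈ r.index,
          ((((1:B) ⊗ₜ[k] HopfAlgebra.antipode (R:=k) (r.left i), 0)) :
              (B ⊗[k] H) × (B' ⊗[k] H))
            ⊗ₜ[k] ((((1:B) ⊗ₜ[k] r.right i, 0)) : (B ⊗[k] H) × (B' ⊗[k] H)))
        + ∑ i ∈ r.index,
          (((0, (1:B') ⊗ₜ[k] HopfAlgebra.antipode (R:=k) (r.left i)) :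
              (B ⊗[k] H) × (B' ⊗[k] H))
            ⊗ₜ[k] (((0, (1:B') ⊗ₜ[k] r.right i)) : (B ⊗[k] H) × (B' ⊗[k] H))) := by
  simp [connMap, ← r.eq, map_sum]

set_option synthInstance.maxHeartbeats 1000000 in
open Coalgebra in
lemma deltaLP_inl (Sinv : H →ₗ[k] H) {x : H} {ι : Type*} (r : Coalgebra.Repr k x ι) :
    deltaLP k H B B' Sinv ((((1:B) ⊗ₜ[k] x, 0)) : (B ⊗[k] H) × (B' ⊗[k] H)) =
      ∑ i ∈ r.index, Sinv (r.right i) ⊗ₜ[k]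
        ((((1:B) ⊗ₜ[k] r.left i, 0)) : (B ⊗[k] H) × (B' ⊗[k] H)) := by
  simp [deltaLP, deltaP, deltaBH, ← r.eq, tmul_sum, map_sum]

set_option synthInstance.maxHeartbeats 1000000 in
open Coalgebra in
lemma deltaLP_inr (Sinv : H →ₗ[k] H) {x : H} {ι : Type*} (r : Coalgebra.Repr k x ι) :
    deltaLP k H B B' Sinv (((0, (1:B') ⊗ₜ[k] x)) : (B ⊗[k] H) × (B' ⊗[k] H)) =
      ∑ i ∈ r.index, Sinv (r.right i) ⊗ₜ[k]
        (((0, (1:B') ⊗ₜ[k] r.left i)) : (B ⊗[k] H) × (B' ⊗[k] H)) := by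
  simp [deltaLP, deltaP, deltaBH, ← r.eq, tmul_sum, map_sum]

open Coalgebra in
lemma connMap_apply (x : H) :
    connMap k H B B' x
      = (∑ i ∈ (ℛ k x).index,
          ((((1:B) ⊗ₜ[k] HopfAlgebra.antipode (R:=k) ((ℛ k x).left i), 0)) :
              (B ⊗[k] H) × (B' ⊗[k] H))
            ⊗ₜ[k] ((((1:B) ⊗ₜ[k] (ℛ k x).right i, 0)) : (B ⊗[k] H) × (B' ⊗[k] H)))
        + ∑ i ∈ (ℛ k x).index,
          (((0, (1:B') ⊗ₜ[k] HopfAlgebra.antipode (R:=k) ((ℛ k x).left i)) :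
              (B ⊗[k] H) × (B' ⊗[k] H))
            ⊗ₜ[k] (((0, (1:B') ⊗ₜ[k] (ℛ k x).right i)) : (B ⊗[k] H) × (B' ⊗[k] H))) :=
  connMap_repr k H B B' (ℛ k x)

open Coalgebra in
lemma deltaLP_inl_antipode (Sinv : H →ₗ[k] H)
    (hS1 : ∀ h, Sinv (HopfAlgebra.antipode (R := k) h) = h) (x : H) :
    deltaLP k H B B' Sinv
        ((((1:B) ⊗ₜ[k] HopfAlgebra.antipode (R:=k) x, 0)) : (B ⊗[k] H) × (B' ⊗[k] H)) =
      ∑ i ∈ (ℛ k x).index, (ℛ k x).left i ⊗ₜ[k]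
        ((((1:B) ⊗ₜ[k] HopfAlgebra.antipode (R:=k) ((ℛ k x).right i), 0)) :
          (B ⊗[k] H) × (B' ⊗[k] H)) := by
  rw [deltaLP_inl k H B B' Sinv (Coalgebra.Repr.antipodeRepr (ℛ k x))]
  simp [Coalgebra.Repr.antipodeRepr, hS1]

open Coalgebra in
lemma deltaLP_inr_antipode (Sinv : H →ₗ[k] H)
    (hS1 : ∀ h, Sinv (HopfAlgebra.antipode (R := k) h) = h) (x : H) :
    deltaLP k H B B' Sinv
        (((0, (1:B') ⊗ₜ[k] HopfAlgebra.antipode (R:=k) x)) : (B ⊗[k] H) × (B' ⊗[k] H)) =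
      ∑ i ∈ (ℛ k x).index, (ℛ k x).left i ⊗ₜ[k]
        (((0, (1:B') ⊗ₜ[k] HopfAlgebra.antipode (R:=k) ((ℛ k x).right i))) :
          (B ⊗[k] H) × (B' ⊗[k] H)) := by
  rw [deltaLP_inr k H B B' Sinv (Coalgebra.Repr.antipodeRepr (ℛ k x))]
  simp [Coalgebra.Repr.antipodeRepr, hS1]

set_option synthInstance.maxHeartbeats 1000000 in
set_option maxHeartbeats 2000000 in
/-- the map l satisfies the second colinearity condition
(id_H ⊗ l)∘Δ = (δ_L ⊗ id_P)∘l, where δ_L(p) = S⁻¹(p₍₁₎) ⊗ p₍₀₎. -/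
theorem stmt13 (Sinv : H →ₗ[k] H)
    (hS1 : ∀ h, Sinv (HopfAlgebra.antipode (R := k) h) = h)
    (hS2 : ∀ h, HopfAlgebra.antipode (R := k) (Sinv h) = h) :
    TensorProduct.map LinearMap.id (connMap k H B B') ∘ₗ Coalgebra.comul
      = (TensorProduct.assoc k H ((B ⊗[k] H) × (B' ⊗[k] H))
            ((B ⊗[k] H) × (B' ⊗[k] H))).toLinearMap
          ∘ₗ TensorProduct.map (deltaLP k H B B' Sinv) LinearMap.id
          ∘ₗ connMap k H B B' := by
  refine LinearMap.ext fun h => ?_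
  simp only [LinearMap.comp_apply, LinearEquiv.coe_coe]
  rw [comul_repr h, connMap_apply k H B B' h]
  simp only [map_sum, map_add, TensorProduct.map_tmul, LinearMap.id_coe, id_eq,
    connMap_apply, deltaLP_inl_antipode k H B B' Sinv hS1, deltaLP_inr_antipode k H B B' Sinv hS1,
    tmul_add, tmul_sum, sum_tmul, Finset.sum_add_distrib, assoc_tmul]
  have key1 := Coalgebra.sum_tmul_tmul_eq (R:=k) (Coalgebra.Repr.arbitrary k h)
    (fun i => Coalgebra.Repr.arbitrary k ((Coalgebra.Repr.arbitrary k h).left i)) (fun i => Coalgebra.Repr.arbitrary k ((Coalgebra.Repr.arbitrary k h).right i))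
  have key2 := Coalgebra.sum_tmul_tmul_eq (R:=k) (Coalgebra.Repr.arbitrary k h)
    (fun i => Coalgebra.Repr.arbitrary k ((Coalgebra.Repr.arbitrary k h).left i)) (fun i => Coalgebra.Repr.arbitrary k ((Coalgebra.Repr.arbitrary k h).right i))
  apply_fun TensorProduct.map (LinearMap.id : H →ₗ[k] H)
    (TensorProduct.map
      ((LinearMap.inl k (B ⊗[k] H) (B' ⊗[k] H)) ∘ₗ (TensorProduct.mk k B H 1)
        ∘ₗ HopfAlgebra.antipode (R := k))
      ((LinearMap.inl k (B ⊗[k] H) (B' ⊗[k] H)) ∘ₗ (TensorProduct.mk k B H 1))) at key1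
  apply_fun TensorProduct.map (LinearMap.id : H →ₗ[k] H)
    (TensorProduct.map
      ((LinearMap.inr k (B ⊗[k] H) (B' ⊗[k] H)) ∘ₗ (TensorProduct.mk k B' H 1)
        ∘ₗ HopfAlgebra.antipode (R := k))
      ((LinearMap.inr k (B ⊗[k] H) (B' ⊗[k] H)) ∘ₗ (TensorProduct.mk k B' H 1))) at key2
  simp only [map_sum, TensorProduct.map_tmul, LinearMap.comp_apply, LinearMap.id_coe, id_eq,
    LinearMap.inl_apply, LinearMap.inr_apply, TensorProduct.mk_apply] at key1 key2
  rw [← key1, ← key2]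

end
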